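/- arXiv:2504.19779 — 2 statements merged into one kernel-verified Lean document; each statement's English description precedes it below -/
import Mathlib

section
/- Let μ and ν be two probability measures on ℝ^d with densities p and q with respect to Lebesgue measure. Then the Jensen–Shannon divergence satisfies d_JS(μ,ν) ≤ (log 2 / 2) ∫_{{x : p(x)+q(x)>0}} (p(x)−q(x))² / (p(x)+q(x)) dx. -/
open MeasureTheory ProbabilityTheory
open scoped ENNReal Classical

noncomputable section

abbrev E (d : ℕ) := EuclideanSpace ℝ (Fin d)

def cube (d : ℕ) : Set (E d) := {x | ∀ i, x i ∈ Set.Icc (0:ℝ) 1}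

def lam (d : ℕ) : Measure (E d) := volume.restrict (cube d)

def KL {d : ℕ} (ν μ : Measure (E d)) : ℝ := ∫ x, Real.log ((ν.rnDeriv μ) x).toReal ∂ν

def JS {d : ℕ} (μ ν : Measure (E d)) : ℝ :=
  (1/2) * (KL ν ((2:ℝ≥0∞)⁻¹ • (μ + ν)) + KL μ ((2:ℝ≥0∞)⁻¹ • (μ + ν)))

def ganLoss {d : ℕ} (μstar : Measure (E d)) (G : E d → E d) (D : E d → ℝ) : ℝ :=
  (1/2) * ((∫ y, Real.log (D y) ∂μstar) + ∫ z, Real.log (1 - D (G z)) ∂(lam d))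

def hessW {d : ℕ} (φ : E d → ℝ) (x : E d) : E d →L[ℝ] E d →L[ℝ] ℝ :=
  fderivWithin ℝ (fun y => fderivWithin ℝ φ (cube d) y) (cube d) x

def gradW {d : ℕ} (φ : E d → ℝ) (x : E d) : E d :=
  (InnerProductSpace.toDual ℝ (E d)).symm (fderivWithin ℝ φ (cube d) x)

def hessMat {d : ℕ} (φ : E d → ℝ) (x : E d) : Matrix (Fin d) (Fin d) ℝ :=
  fun i j => hessW φ x (EuclideanSpace.single i 1) (EuclideanSpace.single j 1)

def C2norm {d : ℕ} (φ : E d → ℝ) : ℝ :=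
  ⨆ k : Fin 3, ⨆ x : cube d, ‖iteratedFDerivWithin ℝ (k : ℕ) φ (cube d) (x : E d)‖

def C21norm {d : ℕ} (φ : E d → ℝ) : ℝ :=
  C2norm φ + ⨆ p : cube d × cube d,
    ‖iteratedFDerivWithin ℝ 2 φ (cube d) (p.1 : E d) - iteratedFDerivWithin ℝ 2 φ (cube d) (p.2 : E d)‖
      / ‖(p.1 : E d) - (p.2 : E d)‖

def Pen {d : ℕ} (κ : ℝ) (φ : E d → ℝ) : ℝ :=
  ∫ u, max 0 (φ ((2:ℝ)⁻¹ • (u.1 + u.2)) - (φ u.1 + φ u.2)/2 + (κ/8) * ‖u.1 - u.2‖^2)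
    ∂((volume.restrict (cube d)).prod (volume.restrict (cube d)))
section AuxJS

noncomputable def hfun (t : ℝ) : ℝ := (1+t) * Real.log (1+t) + (1-t) * Real.log (1-t)

lemma hfun_continuous : Continuous hfun := by
  have h1 : Continuous fun t : ℝ => (1+t) * Real.log (1+t) :=
    Real.continuous_mul_log.comp (continuous_const.add continuous_id)
  have h2 : Continuous fun t : ℝ => (1-t) * Real.log (1-t) :=
    Real.continuous_mul_log.comp (continuous_const.sub continuous_id)
  exact h1.add h2

lemma hasSum_even {x : ℝ} (hx : |x| < 1) :
    HasSum (fun k : ℕ => 2 * x^(2*k+1) / (2*(k:ℝ)+1)) (Real.log (1+x) - Real.log (1-x)) := by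
  have hx' : |(-x)| < 1 := by rwa [abs_neg]
  have h3 := (Real.hasSum_pow_div_log_of_abs_lt_one hx).sub
    (Real.hasSum_pow_div_log_of_abs_lt_one hx')
  rw [show (1:ℝ) - -x = 1 + x by ring] at h3
  have h4 : HasSum (fun n : ℕ => x ^ (n+1) / (n+1) - (-x) ^ (n+1) / (n+1))
      (Real.log (1+x) - Real.log (1-x)) := by
    rw [show Real.log (1+x) - Real.log (1-x) = -Real.log (1-x) - -Real.log (1+x) by ring]
    exact h3
  have hinj : Function.Injective (fun k : ℕ => 2*k) := fun a b h => by
    simp only at h; omega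
  have hzero : ∀ n, n ∉ Set.range (fun k : ℕ => 2*k) → x ^ (n+1) / (n+1) - (-x) ^ (n+1) / (n+1) = 0 := by
    intro n hn
    have hodd : Odd n := by
      rcases Nat.even_or_odd n with ⟨m, hm⟩ | ho
      · exact absurd ⟨m, show 2*m = n by omega⟩ hn
      · exact ho
    obtain ⟨m, hm⟩ := hodd
    have heven : Even (n+1) := ⟨m+1, by omega⟩
    rw [heven.neg_pow, sub_self]
  have h5 := (Function.Injective.hasSum_iff hinj hzero).2 h4
  refine h5.congr_fun (fun k => ?_)
  simp only [Function.comp]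
  have hodd : Odd (2*k+1) := ⟨k, by omega⟩
  rw [hodd.neg_pow]
  push_cast
  ring

lemma hasSum_odd {x : ℝ} (hx : |x| < 1) :
    HasSum (fun k : ℕ => x^(2*k+2) / ((k:ℝ)+1)) (-Real.log (1-x) - Real.log (1+x)) := by
  have hx' : |(-x)| < 1 := by rwa [abs_neg]
  have h3 := (Real.hasSum_pow_div_log_of_abs_lt_one hx).add
    (Real.hasSum_pow_div_log_of_abs_lt_one hx')
  rw [show (1:ℝ) - -x = 1 + x by ring] at h3
  have h4 : HasSum (fun n : ℕ => x ^ (n+1) / (n+1) + (-x) ^ (n+1) / (n+1))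
      (-Real.log (1-x) - Real.log (1+x)) := by
    rw [show -Real.log (1-x) - Real.log (1+x) = -Real.log (1-x) + -Real.log (1+x) by ring]
    exact h3
  have hinj : Function.Injective (fun k : ℕ => 2*k+1) := fun a b h => by
    simp only at h; omega
  have hzero : ∀ n, n ∉ Set.range (fun k : ℕ => 2*k+1) →
      x ^ (n+1) / (n+1) + (-x) ^ (n+1) / (n+1) = 0 := by
    intro n hn
    have heven : Even n := by
      rcases Nat.even_or_odd n with he | ⟨m, hm⟩
      · exact he
      · exact absurd ⟨m, show 2*m+1 = n by omega⟩ hn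
    obtain ⟨m, hm⟩ := heven
    have hodd : Odd (n+1) := ⟨m, by omega⟩
    rw [hodd.neg_pow]
    ring
  have h5 := (Function.Injective.hasSum_iff hinj hzero).2 h4
  refine h5.congr_fun (fun k => ?_)
  simp only [Function.comp]
  have heven : Even (2*k+1+1) := ⟨k+1, by omega⟩
  rw [heven.neg_pow]
  push_cast
  have : ((2:ℝ)*k+1+1) ≠ 0 := by positivity
  rw [show 2*k+1+1 = 2*k+2 from rfl]
  field_simp
  ring

lemma hasSum_hfun {x : ℝ} (hx : |x| < 1) :
    HasSum (fun k : ℕ => x^(2*k+2) / (((k:ℝ)+1)*(2*(k:ℝ)+1))) (hfun x) := by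
  have h1 := (hasSum_even hx).mul_left x
  have h2 := hasSum_odd hx
  have h3 := h1.sub h2
  have hval : x * (Real.log (1+x) - Real.log (1-x)) - (-Real.log (1-x) - Real.log (1+x))
      = hfun x := by unfold hfun; ring
  rw [hval] at h3
  refine h3.congr_fun (fun k => ?_)
  have h1 : ((k:ℝ)+1) ≠ 0 := by positivity
  have h2 : (2*(k:ℝ)+1) ≠ 0 := by positivity
  field_simp
  ring

lemma hfun_mono {x y : ℝ} (hx0 : 0 ≤ x) (hxy : x ≤ y) (hy1 : y < 1) :
    hfun x ≤ x^2 / y^2 * hfun y := by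
  rcases eq_or_lt_of_le (hx0.trans hxy) with hy0 | hy0
  · -- y = 0, hence x = 0
    have hx : x = 0 := le_antisymm (hxy.trans hy0.ge) hx0
    simp [hx, ← hy0, hfun]
  have hxabs : |x| < 1 := by rw [abs_of_nonneg hx0]; exact lt_of_le_of_lt hxy hy1
  have hyabs : |y| < 1 := by rw [abs_of_nonneg hy0.le]; exact hy1
  have h1 := hasSum_hfun hxabs
  have h2 := (hasSum_hfun hyabs).mul_left (x^2/y^2)
  refine hasSum_le (fun k => ?_) h1 h2
  have hc : (0:ℝ) < ((k:ℝ)+1)*(2*(k:ℝ)+1) := by positivity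
  have hy2 : y^2 ≠ 0 := by positivity
  have hpow : x^(2*k+2) ≤ x^2 * y^(2*k) :=
    calc x^(2*k+2) = x^2 * x^(2*k) := by ring
    _ ≤ x^2 * y^(2*k) :=
        mul_le_mul_of_nonneg_left (pow_le_pow_left₀ hx0 hxy _) (by positivity)
  have heq : x^2/y^2 * (y^(2*k+2)/(((k:ℝ)+1)*(2*(k:ℝ)+1)))
      = (x^2 * y^(2*k))/(((k:ℝ)+1)*(2*(k:ℝ)+1)) := by
    field_simp
    ring
  rw [heq]
  gcongr

lemma hfun_one : hfun 1 = 2 * Real.log 2 := by norm_num [hfun]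

lemma hfun_le {t : ℝ} (ht : |t| ≤ 1) : hfun t ≤ 2 * Real.log 2 * t^2 := by
  have key : ∀ s : ℝ, 0 ≤ s → s ≤ 1 → hfun s ≤ 2 * Real.log 2 * s^2 := by
    intro s hs0 hs1
    rcases eq_or_lt_of_le hs1 with h1 | h1
    · rw [h1, hfun_one]; norm_num
    · have hcont : ContinuousAt (fun y : ℝ => s^2/y^2 * hfun y) 1 := by
        have : ContinuousAt (fun y : ℝ => y^2) 1 := (continuous_pow 2).continuousAt
        exact (continuousAt_const.div this (by norm_num)).mul hfun_continuous.continuousAt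
      have htend : Filter.Tendsto (fun y : ℝ => s^2/y^2 * hfun y) (nhdsWithin 1 (Set.Iio 1))
          (nhds (s^2/1^2 * hfun 1)) := by
        have := hcont.tendsto
        simp only [one_pow] at this ⊢
        exact this.mono_left nhdsWithin_le_nhds
      have heval : s^2/1^2 * hfun 1 = 2 * Real.log 2 * s^2 := by
        rw [hfun_one]; ring
      have hev : ∀ᶠ y in nhdsWithin (1:ℝ) (Set.Iio 1), hfun s ≤ s^2/y^2 * hfun y := by
        filter_upwards [Ioo_mem_nhdsLT_of_mem
          (show (1:ℝ) ∈ Set.Ioc s 1 from ⟨h1, le_refl 1⟩)] with y hy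
        exact hfun_mono hs0 hy.1.le hy.2
      exact ge_of_tendsto (heval ▸ htend) hev
  rcases le_or_gt 0 t with h | h
  · exact key t h (abs_le.1 ht).2
  · have h2 := key (-t) (by linarith) (by linarith [(abs_le.1 ht).1])
    have hsym : hfun (-t) = hfun t := by
      unfold hfun
      rw [show (1:ℝ) + -t = 1 - t by ring, show (1:ℝ) - -t = 1 + t by ring]
      ring
    rw [hsym, neg_sq] at h2
    exact h2


lemma rlogr_abs {r : ℝ} (hr0 : 0 ≤ r) (hr2 : r ≤ 2) : |r * Real.log r| ≤ 2 := by
  rw [abs_le]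
  constructor
  · rcases eq_or_lt_of_le hr0 with h0 | h0
    · simp [← h0]
    · have h1 := Real.log_le_sub_one_of_pos (show (0:ℝ) < 1/r by positivity)
      rw [Real.log_div one_ne_zero (ne_of_gt h0), Real.log_one] at h1
      have h3 := mul_le_mul_of_nonneg_left h1 h0.le
      have h4 : r * (1/r - 1) = 1 - r := by field_simp
      nlinarith [h3, h4]
  · rcases le_or_gt r 1 with h1 | h1
    · have : Real.log r ≤ 0 := Real.log_nonpos hr0 h1
      nlinarith
    · have h2 : Real.log r ≤ r - 1 := Real.log_le_sub_one_of_pos (by linarith)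
      nlinarith

lemma term_abs_le {a b : ℝ} (ha : 0 ≤ a) (hb : 0 ≤ b) :
    |b * Real.log (b / ((a+b)/2))| ≤ a + b := by
  rcases eq_or_lt_of_le (by linarith : (0:ℝ) ≤ a + b) with hs | hs
  · have hb0 : b = 0 := by linarith
    simp [hb0]
    linarith
  · set r := b / ((a+b)/2) with hr
    have hr0 : 0 ≤ r := by positivity
    have hr2 : r ≤ 2 := by
      rw [hr, div_le_iff₀ (by linarith : (0:ℝ) < (a+b)/2)]
      linarith
    have hbL : b * Real.log r = (a+b)/2 * (r * Real.log r) := by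
      rw [hr]; field_simp
    rw [hbL]
    calc |(a+b)/2 * (r * Real.log r)| = (a+b)/2 * |r * Real.log r| := by
          rw [abs_mul, abs_of_nonneg (by linarith : (0:ℝ) ≤ (a+b)/2)]
    _ ≤ (a+b)/2 * 2 := by
          exact mul_le_mul_of_nonneg_left (rlogr_abs hr0 hr2) (by linarith)
    _ = a + b := by ring

lemma pointwise_key {a b : ℝ} (ha : 0 ≤ a) (hb : 0 ≤ b) :
    b * Real.log (b / ((a+b)/2)) + a * Real.log (a / ((a+b)/2))
      ≤ Real.log 2 * ((a-b)^2 / (a+b)) := by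
  rcases eq_or_lt_of_le (by linarith : (0:ℝ) ≤ a + b) with hs | hs
  · have ha0 : a = 0 := by linarith
    have hb0 : b = 0 := by linarith
    simp [ha0, hb0]
  · set t := (a-b)/(a+b) with htdef
    have ht : |t| ≤ 1 := by
      rw [abs_le]
      constructor
      · rw [htdef, le_div_iff₀ hs]; linarith
      · rw [htdef, div_le_iff₀ hs]; linarith
    have e1 : b / ((a+b)/2) = 1 - t := by
      rw [htdef]; field_simp; ring
    have e2 : a / ((a+b)/2) = 1 + t := by
      rw [htdef]; field_simp; ring
    rw [e1, e2]
    have key := mul_le_mul_of_nonneg_left (hfun_le ht)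
      (show (0:ℝ) ≤ (a+b)/2 by linarith)
    have eA : (a+b)/2 * hfun t = b * Real.log (1-t) + a * Real.log (1+t) := by
      unfold hfun
      have hab : a + b ≠ 0 := ne_of_gt hs
      rw [htdef]
      field_simp
      ring
    have eB : (a+b)/2 * (2 * Real.log 2 * t^2) = Real.log 2 * ((a-b)^2/(a+b)) := by
      have hab : a + b ≠ 0 := ne_of_gt hs
      rw [htdef]
      field_simp
    rw [eA, eB] at key
    exact key

lemma KL_withDensity {d : ℕ} (p q : E d → ℝ) (hp_meas : Measurable p) (hq_meas : Measurable q)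
    (hp_nonneg : ∀ x, 0 ≤ p x) (hq_nonneg : ∀ x, 0 ≤ q x)
    (hfin : ∫⁻ x, ENNReal.ofReal ((p x + q x)/2) ∂(volume : Measure (E d)) ≠ ∞) :
    KL (volume.withDensity fun x => ENNReal.ofReal (q x))
       (volume.withDensity fun x => ENNReal.ofReal ((p x + q x)/2))
      = ∫ x, q x * Real.log (q x / ((p x + q x)/2)) := by
  set S : E d → ℝ≥0∞ := fun x => ENNReal.ofReal ((p x + q x)/2) with hS_def
  have hS_meas : Measurable S := ((hp_meas.add hq_meas).div_const 2).ennreal_ofReal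
  haveI : IsFiniteMeasure (volume.withDensity S) := by
    constructor
    rw [withDensity_apply _ MeasurableSet.univ, Measure.restrict_univ]
    exact hfin.lt_top
  set g : E d → ℝ≥0∞ := fun x => ENNReal.ofReal (q x / ((p x + q x)/2)) with hg_def
  have hg_meas : Measurable g := (hq_meas.div ((hp_meas.add hq_meas).div_const 2)).ennreal_ofReal
  have hcomp : (volume.withDensity S).withDensity g
      = volume.withDensity fun x => ENNReal.ofReal (q x) := by
    rw [← withDensity_mul _ hS_meas hg_meas]
    congr 1
    funext x
    simp only [Pi.mul_apply, hS_def, hg_def]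
    rcases lt_or_ge 0 (p x + q x) with h | h
    · have hc : (p x + q x)/2 ≠ 0 := by positivity
      rw [← ENNReal.ofReal_mul (by positivity)]
      congr 1
      field_simp
    · have hp0 : p x = 0 := le_antisymm (by linarith [hq_nonneg x]) (hp_nonneg x)
      have hq0 : q x = 0 := le_antisymm (by linarith [hp_nonneg x]) (hq_nonneg x)
      simp [hp0, hq0]
  have hrn : (volume.withDensity fun x => ENNReal.ofReal (q x)).rnDeriv (volume.withDensity S)
      =ᵐ[volume.withDensity S] g := by
    rw [← hcomp]
    exact Measure.rnDeriv_withDensity _ hg_meas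
  have hac : (volume.withDensity fun x => ENNReal.ofReal (q x)) ≪ volume.withDensity S := by
    rw [← hcomp]
    exact withDensity_absolutelyContinuous _ _
  have hrn' := hac.ae_le hrn
  unfold KL
  have hcong : ∫ x, Real.log (((volume.withDensity fun x => ENNReal.ofReal (q x)).rnDeriv
        (volume.withDensity S)) x).toReal ∂(volume.withDensity fun x => ENNReal.ofReal (q x))
      = ∫ x, Real.log (q x / ((p x + q x)/2)) ∂(volume.withDensity fun x => ENNReal.ofReal (q x)) := by
    refine integral_congr_ae ?_
    filter_upwards [hrn'] with x hx
    rw [hx, hg_def]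
    rw [ENNReal.toReal_ofReal]
    exact div_nonneg (hq_nonneg x) (by linarith [hp_nonneg x, hq_nonneg x])
  rw [hcong]
  have hQcoe : (fun x : E d => ENNReal.ofReal (q x))
      = fun x => ((fun y : E d => (q y).toNNReal) x : ℝ≥0∞) := rfl
  rw [hQcoe, integral_withDensity_eq_integral_smul hq_meas.real_toNNReal]
  refine integral_congr_ae (ae_of_all _ fun x => ?_)
  simp only [NNReal.smul_def, smul_eq_mul]
  rw [Real.coe_toNNReal _ (hq_nonneg x)]

end AuxJS

/-- `d_JS(μ,ν) ≤ (log 2 / 2) ∫_{p+q>0} (p−q)²/(p+q)`. -/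
theorem stmt2 {d : ℕ} (μ ν : Measure (E d))
    [IsProbabilityMeasure μ] [IsProbabilityMeasure ν]
    (p q : E d → ℝ) (hp_meas : Measurable p) (hq_meas : Measurable q)
    (hp_nonneg : ∀ x, 0 ≤ p x) (hq_nonneg : ∀ x, 0 ≤ q x)
    (hμ : μ = volume.withDensity (fun x => ENNReal.ofReal (p x)))
    (hν : ν = volume.withDensity (fun x => ENNReal.ofReal (q x))) :
    JS μ ν ≤ (Real.log 2 / 2) *
      ∫ x in {x : E d | 0 < p x + q x}, (p x - q x)^2 / (p x + q x) := by
  -- basic lintegral facts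
  have hlp : ∫⁻ x, ENNReal.ofReal (p x) ∂(volume : Measure (E d)) = 1 := by
    have h1 : μ Set.univ = 1 := measure_univ
    rwa [hμ, withDensity_apply _ MeasurableSet.univ, Measure.restrict_univ] at h1
  have hlq : ∫⁻ x, ENNReal.ofReal (q x) ∂(volume : Measure (E d)) = 1 := by
    have h1 : ν Set.univ = 1 := measure_univ
    rwa [hν, withDensity_apply _ MeasurableSet.univ, Measure.restrict_univ] at h1
  -- finiteness of the density of the midpoint measure
  have hfin : ∫⁻ x, ENNReal.ofReal ((p x + q x)/2) ∂(volume : Measure (E d)) ≠ ∞ := by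
    have : ∀ x, ENNReal.ofReal ((p x + q x)/2) ≤
        ENNReal.ofReal (p x) + ENNReal.ofReal (q x) := by
      intro x
      rw [← ENNReal.ofReal_add (hp_nonneg x) (hq_nonneg x)]
      exact ENNReal.ofReal_le_ofReal (by linarith [hp_nonneg x, hq_nonneg x])
    have hle := lintegral_mono (μ := (volume : Measure (E d))) this
    rw [lintegral_add_left hp_meas.ennreal_ofReal, hlp, hlq] at hle
    exact ne_top_of_le_ne_top (by norm_num) hle
  -- the midpoint measure as a density measure
  have hmm : (2:ℝ≥0∞)⁻¹ • (μ + ν)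
      = volume.withDensity fun x => ENNReal.ofReal ((p x + q x)/2) := by
    rw [hμ, hν, ← withDensity_add_left hp_meas.ennreal_ofReal,
      ← withDensity_smul' _ _ (by norm_num : (2:ℝ≥0∞)⁻¹ ≠ ∞)]
    congr 1
    funext x
    simp only [Pi.smul_apply, Pi.add_apply, smul_eq_mul]
    rw [← ENNReal.ofReal_add (hp_nonneg x) (hq_nonneg x),
      show (p x + q x)/2 = (p x + q x) * (2:ℝ)⁻¹ by ring,
      ENNReal.ofReal_mul (by linarith [hp_nonneg x, hq_nonneg x])]
    rw [mul_comm]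
    congr 1
    rw [ENNReal.ofReal_inv_of_pos (by norm_num : (0:ℝ) < 2)]
    norm_num
  -- KL computations
  have e1 : KL ν ((2:ℝ≥0∞)⁻¹ • (μ + ν))
      = ∫ x, q x * Real.log (q x / ((p x + q x)/2)) := by
    rw [hmm, hν]
    exact KL_withDensity p q hp_meas hq_meas hp_nonneg hq_nonneg hfin
  have e2 : KL μ ((2:ℝ≥0∞)⁻¹ • (μ + ν))
      = ∫ x, p x * Real.log (p x / ((p x + q x)/2)) := by
    have hSS : (fun x : E d => ENNReal.ofReal ((q x + p x)/2))
        = fun x => ENNReal.ofReal ((p x + q x)/2) := by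
      funext x; rw [add_comm]
    have hfin' : ∫⁻ x, ENNReal.ofReal ((q x + p x)/2) ∂(volume : Measure (E d)) ≠ ∞ := by
      rw [hSS]; exact hfin
    have h := KL_withDensity q p hq_meas hp_meas hq_nonneg hp_nonneg hfin'
    rw [hSS] at h
    rw [hmm, hμ, h]
    refine integral_congr_ae (ae_of_all _ fun x => ?_)
    simp only []
    rw [add_comm (q x) (p x)]
  -- integrability
  have hint_p : Integrable p (volume : Measure (E d)) := by
    refine ⟨hp_meas.aestronglyMeasurable, ?_⟩
    rw [hasFiniteIntegral_iff_ofReal (ae_of_all _ hp_nonneg), hlp]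
    norm_num
  have hint_q : Integrable q (volume : Measure (E d)) := by
    refine ⟨hq_meas.aestronglyMeasurable, ?_⟩
    rw [hasFiniteIntegral_iff_ofReal (ae_of_all _ hq_nonneg), hlq]
    norm_num
  have hint_s : Integrable (fun x => p x + q x) (volume : Measure (E d)) := hint_p.add hint_q
  have hmeas_Lq : Measurable (fun x => q x * Real.log (q x / ((p x + q x)/2))) :=
    hq_meas.mul ((hq_meas.div ((hp_meas.add hq_meas).div_const 2)).log)
  have hmeas_Lp : Measurable (fun x => p x * Real.log (p x / ((p x + q x)/2))) :=
    hp_meas.mul ((hp_meas.div ((hp_meas.add hq_meas).div_const 2)).log)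
  have hint_Lq : Integrable (fun x => q x * Real.log (q x / ((p x + q x)/2)))
      (volume : Measure (E d)) := by
    refine hint_s.mono' hmeas_Lq.aestronglyMeasurable (ae_of_all _ fun x => ?_)
    rw [Real.norm_eq_abs]
    exact term_abs_le (hp_nonneg x) (hq_nonneg x)
  have hint_Lp : Integrable (fun x => p x * Real.log (p x / ((p x + q x)/2)))
      (volume : Measure (E d)) := by
    refine hint_s.mono' hmeas_Lp.aestronglyMeasurable (ae_of_all _ fun x => ?_)
    rw [Real.norm_eq_abs]
    have h := term_abs_le (hq_nonneg x) (hp_nonneg x)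
    rw [add_comm (q x) (p x)] at h
    exact h
  -- properties of R
  have hR_nonneg : ∀ x, 0 ≤ (p x - q x)^2 / (p x + q x) := fun x =>
    div_nonneg (sq_nonneg _) (by linarith [hp_nonneg x, hq_nonneg x])
  have hR_le : ∀ x, (p x - q x)^2 / (p x + q x) ≤ p x + q x := by
    intro x
    rcases lt_or_ge 0 (p x + q x) with h | h
    · rw [div_le_iff₀ h]
      nlinarith [hp_nonneg x, hq_nonneg x]
    · have hp0 : p x = 0 := le_antisymm (by linarith [hq_nonneg x]) (hp_nonneg x)
      have hq0 : q x = 0 := le_antisymm (by linarith [hp_nonneg x]) (hq_nonneg x)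
      simp [hp0, hq0]
  have hmeas_R : Measurable (fun x => (p x - q x)^2 / (p x + q x)) :=
    ((hp_meas.sub hq_meas).pow_const 2).div (hp_meas.add hq_meas)
  have hint_R : Integrable (fun x => (p x - q x)^2 / (p x + q x)) (volume : Measure (E d)) := by
    refine hint_s.mono' hmeas_R.aestronglyMeasurable (ae_of_all _ fun x => ?_)
    rw [Real.norm_eq_abs, abs_of_nonneg (hR_nonneg x)]
    exact hR_le x
  -- set integral equals full integral
  have hset : ∫ x in {x : E d | 0 < p x + q x}, (p x - q x)^2 / (p x + q x)
      = ∫ x, (p x - q x)^2 / (p x + q x) := by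
    refine setIntegral_eq_integral_of_forall_compl_eq_zero fun x hx => ?_
    simp only [Set.mem_setOf_eq, not_lt] at hx
    have hp0 : p x = 0 := le_antisymm (by linarith [hq_nonneg x, hx]) (hp_nonneg x)
    have hq0 : q x = 0 := le_antisymm (by linarith [hp_nonneg x, hx]) (hq_nonneg x)
    simp [hp0, hq0]
  -- main estimate
  have hmain : (∫ x, q x * Real.log (q x / ((p x + q x)/2)))
      + (∫ x, p x * Real.log (p x / ((p x + q x)/2)))
      ≤ Real.log 2 * ∫ x, (p x - q x)^2 / (p x + q x) := by
    rw [← integral_add hint_Lq hint_Lp, ← integral_const_mul]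
    refine integral_mono (hint_Lq.add hint_Lp) (hint_R.const_mul _) fun x => ?_
    exact pointwise_key (hp_nonneg x) (hq_nonneg x)
  unfold JS
  rw [e1, e2, hset]
  linarith [hmain]

end
end

section
/- Let M>0 and let φ∈C²([0,1]^d,ℝ) satisfy Hess φ(x) ≥ (1/M)·Id for all x∈[0,1]^d, and let λ denote Lebesgue measure on [0,1]^d. Then ∇φ:[0,1]^d→∇φ([0,1]^d) is bijective and the pushforward measure (∇φ)_#λ is absolutely continuous with density p(x) = 1/|det[Hess φ((∇φ)^{-1}(x))]| for x∈∇φ([0,1]^d) (and p=0 outside), and p(x) ≤ M^d for all x∈∇φ([0,1]^d). If additionally Hess φ(x) ≤ M·Id for all x∈[0,1]^d, then p(x) ≥ M^{−d} for all x∈∇φ([0,1]^d). -/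
open MeasureTheory ProbabilityTheory
open scoped ENNReal Classical

noncomputable section

section Aux
open Matrix

lemma cube_convex (d : ℕ) : Convex ℝ (cube d) := by
  intro x hx y hy a b ha hb hab i
  have := (convex_Icc (0:ℝ) 1) (hx i) (hy i) ha hb hab
  simpa [PiLp.add_apply, PiLp.smul_apply, smul_eq_mul] using this

lemma cube_isClosed (d : ℕ) : IsClosed (cube d) := by
  have : cube d = ⋂ i, (EuclideanSpace.proj i : E d →L[ℝ] ℝ) ⁻¹' Set.Icc (0:ℝ) 1 := by
    ext x; simp [cube, PiLp.proj_apply]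
  rw [this]
  exact isClosed_iInter fun i => isClosed_Icc.preimage (EuclideanSpace.proj i).continuous

lemma cube_measurable (d : ℕ) : MeasurableSet (cube d) := (cube_isClosed d).measurableSet

lemma cube_interior_nonempty (d : ℕ) : (interior (cube d)).Nonempty := by
  set U : Set (E d) := ⋂ i, (EuclideanSpace.proj i : E d →L[ℝ] ℝ) ⁻¹' Set.Ioo (0:ℝ) 1 with hU
  have hUopen : IsOpen U := isOpen_iInter_of_finite fun i =>
    isOpen_Ioo.preimage (EuclideanSpace.proj i).continuous
  have hUsub : U ⊆ cube d := by
    intro x hx i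
    have := Set.mem_iInter.1 hx i
    simp only [Set.mem_preimage, PiLp.proj_apply] at this
    exact ⟨this.1.le, this.2.le⟩
  have hc : ((WithLp.equiv 2 (Fin d → ℝ)).symm fun _ => (1:ℝ)/2) ∈ U := by
    refine Set.mem_iInter.2 fun i => ?_
    simp [PiLp.proj_apply]
    norm_num
  exact ⟨_, interior_mono hUsub (hUopen.subset_interior_iff.2 le_rfl hc)⟩

lemma cube_uniqueDiffOn (d : ℕ) : UniqueDiffOn ℝ (cube d) :=
  uniqueDiffOn_convex (cube_convex d) (cube_interior_nonempty d)

lemma cube_subset_closure_interior (d : ℕ) : cube d ⊆ closure (interior (cube d)) := by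
  obtain ⟨c, hc⟩ := cube_interior_nonempty d
  intro x hx
  apply mem_closure_iff_seq_limit.2
  refine ⟨fun n => x + ((1:ℝ)/(n+1)) • (c - x), fun n => ?_, ?_⟩
  · exact (cube_convex d).add_smul_sub_mem_interior hx hc
      ⟨by positivity, by rw [div_le_one (by positivity)]; linarith⟩
  · have h0 : Filter.Tendsto (fun n : ℕ => (1:ℝ)/(n+1)) Filter.atTop (nhds 0) :=
      tendsto_one_div_add_atTop_nhds_zero_nat
    have := (h0.smul_const (c - x)).const_add x
    simpa using this


variable {d : ℕ} {φ : E d → ℝ}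

/-- the "Riesz" map as a genuine real CLM -/
def Smap (d : ℕ) : (E d →L[ℝ] ℝ) →L[ℝ] E d :=
  ∑ i : Fin d, (ContinuousLinearMap.apply ℝ ℝ
      (EuclideanSpace.single i 1)).smulRight (EuclideanSpace.single i 1)

lemma Smap_apply (ℓ : E d →L[ℝ] ℝ) (j : Fin d) : Smap d ℓ j = ℓ (EuclideanSpace.single j 1) := by
  have h : Smap d ℓ = ∑ i : Fin d, ℓ (EuclideanSpace.single i 1) • EuclideanSpace.single i 1 := by
    simp [Smap, ContinuousLinearMap.sum_apply]
  have h2 := map_sum (EuclideanSpace.proj (𝕜 := ℝ) j)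
    (fun i => ℓ (EuclideanSpace.single i 1) • (EuclideanSpace.single i 1 : E d)) Finset.univ
  rw [h]
  have h3 : (EuclideanSpace.proj (𝕜 := ℝ) j)
      (∑ i : Fin d, ℓ (EuclideanSpace.single i 1) • (EuclideanSpace.single i 1 : E d))
      = (∑ i : Fin d, ℓ (EuclideanSpace.single i 1) • (EuclideanSpace.single i 1 : E d)) j := rfl
  rw [← h3, h2]
  simp [EuclideanSpace.single_apply]

lemma toDual_symm_eq (ℓ : E d →L[ℝ] ℝ) :
    (InnerProductSpace.toDual ℝ (E d)).symm ℓ = Smap d ℓ := by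
  ext j
  rw [Smap_apply]
  have h1 : (inner ℝ ((InnerProductSpace.toDual ℝ (E d)).symm ℓ)
        (EuclideanSpace.single j 1) : ℝ)
      = ℓ (EuclideanSpace.single j 1) := InnerProductSpace.toDual_symm_apply
  rw [← h1]
  rw [EuclideanSpace.inner_single_right]
  simp

lemma gradW_eq (x : E d) : gradW φ x = Smap d (fderivWithin ℝ φ (cube d) x) :=
  toDual_symm_eq _

/-- derivative of the within-gradient map -/
def Amap (φ : E d → ℝ) (x : E d) : E d →L[ℝ] E d := (Smap d).comp (hessW φ x)

lemma hasFDeriv_F (hφ : ContDiffOn ℝ 2 φ (cube d)) {x : E d} (hx : x ∈ cube d) :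
    HasFDerivWithinAt (fun y => fderivWithin ℝ φ (cube d) y) (hessW φ x) (cube d) x := by
  have h1 : ContDiffOn ℝ 1 (fun y => fderivWithin ℝ φ (cube d) y) (cube d) :=
    hφ.fderivWithin (cube_uniqueDiffOn d) (by norm_num)
  exact ((h1.differentiableOn (by norm_num)) x hx).hasFDerivWithinAt

lemma hasFDeriv_grad (hφ : ContDiffOn ℝ 2 φ (cube d)) {x : E d} (hx : x ∈ cube d) :
    HasFDerivWithinAt (gradW φ) (Amap φ x) (cube d) x := by
  have h := (Smap d).hasFDerivAt.comp_hasFDerivWithinAt x (hasFDeriv_F hφ hx)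
  have heq : (Smap d) ∘ (fun y => fderivWithin ℝ φ (cube d) y) = gradW φ := by
    funext y; simp [Function.comp, gradW_eq]
  rwa [heq] at h

lemma grad_injOn (hφ : ContDiffOn ℝ 2 φ (cube d)) {M : ℝ} (hM : 0 < M)
    (hconv : ∀ x ∈ cube d, ∀ v : E d, (1/M) * ‖v‖^2 ≤ hessW φ x v v) :
    Set.InjOn (gradW φ) (cube d) := by
  intro a ha b hb hab
  by_contra hne
  have hFab : fderivWithin ℝ φ (cube d) a = fderivWithin ℝ φ (cube d) b :=
    (InnerProductSpace.toDual ℝ (E d)).symm.injective hab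
  set v : E d := a - b with hv
  have hvne : v ≠ 0 := sub_ne_zero.2 hne
  set γ : ℝ → E d := fun t => b + t • v with hγ
  have hγmem : ∀ t ∈ Set.Icc (0:ℝ) 1, γ t ∈ cube d := by
    intro t ht
    have : γ t = (1 - t) • b + t • a := by
      simp only [hγ, hv, smul_sub, sub_smul, one_smul]; abel
    rw [this]
    exact cube_convex d hb ha (by linarith [ht.1, ht.2]) ht.1 (by ring)
  set h₁ : ℝ → ℝ := fun t => fderivWithin ℝ φ (cube d) (γ t) v with hh₁
  have hderiv : ∀ t ∈ Set.Icc (0:ℝ) 1,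
      HasDerivWithinAt h₁ (hessW φ (γ t) v v) (Set.Icc (0:ℝ) 1) t := by
    intro t ht
    have hγ' : HasDerivWithinAt γ v (Set.Icc (0:ℝ) 1) t := by
      have h2 : HasDerivAt γ v t := by
        simpa [hγ] using ((hasDerivAt_id t).smul_const v).const_add b
      exact h2.hasDerivWithinAt
    have hF : HasFDerivWithinAt (fun y => fderivWithin ℝ φ (cube d) y) (hessW φ (γ t))
        (cube d) (γ t) := hasFDeriv_F hφ (hγmem t ht)
    have hcomp : HasDerivWithinAt (fun t => fderivWithin ℝ φ (cube d) (γ t))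
        (hessW φ (γ t) v) (Set.Icc (0:ℝ) 1) t :=
      hF.comp_hasDerivWithinAt t hγ' hγmem
    have hconst : HasDerivWithinAt (fun _ : ℝ => v) 0 (Set.Icc (0:ℝ) 1) t :=
      (hasDerivWithinAt_const _ _ _)
    have := hcomp.clm_apply hconst
    simpa using this
  have hpos : ∀ t ∈ interior (Set.Icc (0:ℝ) 1), 0 < hessW φ (γ t) v v := by
    intro t ht
    have ht' : t ∈ Set.Icc (0:ℝ) 1 := interior_subset ht
    have h3 := hconv (γ t) (hγmem t ht') v
    have hn : 0 < ‖v‖ := norm_pos_iff.2 hvne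
    have h4 : 0 < (1/M) * ‖v‖^2 := mul_pos (one_div_pos.2 hM) (pow_pos hn 2)
    linarith
  have hmono : StrictMonoOn h₁ (Set.Icc (0:ℝ) 1) := by
    apply strictMonoOn_of_hasDerivWithinAt_pos (convex_Icc 0 1)
      (fun t ht => (hderiv t ht).continuousWithinAt)
      (fun t ht => ((hderiv t (interior_subset ht)).mono interior_subset))
      hpos
  have h01 : h₁ 0 < h₁ 1 := hmono (by norm_num) (by norm_num) one_pos
  have : h₁ 0 = h₁ 1 := by
    simp only [hh₁, hγ]
    rw [show b + (0:ℝ) • v = b by simp, show b + (1:ℝ) • v = a by simp [hv]]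
    rw [hFab]
  exact absurd this h01.ne


lemma hess_symm (hφ : ContDiffOn ℝ 2 φ (cube d)) {x : E d} (hx : x ∈ cube d) :
    (hessMat φ x).IsHermitian := by
  have hsym : IsSymmSndFDerivWithinAt ℝ φ (cube d) x :=
    (hφ x hx).isSymmSndFDerivWithinAt (by simp) (cube_uniqueDiffOn d)
      (cube_subset_closure_interior d hx) hx
  ext i j
  simpa [Matrix.conjTranspose, hessMat, hessW] using
    (hsym (EuclideanSpace.single j 1) (EuclideanSpace.single i 1))

lemma hess_qf (x : E d) (v : E d) :
    hessW φ x v v = ∑ i, ∑ j, (v i * v j) * hessMat φ x i j := by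
  have hv : ∑ i : Fin d, v i • (EuclideanSpace.single i 1 : E d) = v := by
    have := (EuclideanSpace.basisFun (Fin d) ℝ).sum_repr v
    simpa [EuclideanSpace.basisFun_apply, EuclideanSpace.basisFun_repr] using this
  have hterm : ∀ i j : Fin d, hessW φ x (v i • (EuclideanSpace.single i 1 : E d))
      (v j • (EuclideanSpace.single j 1 : E d)) = (v i * v j) * hessMat φ x i j := by
    intro i j
    simp only [_root_.map_smul, ContinuousLinearMap.smul_apply, smul_eq_mul, hessMat]
    ring
  conv_lhs => rw [← hv]
  simp only [map_sum, ContinuousLinearMap.sum_apply, ContinuousLinearMap.coe_sum',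
    Finset.sum_apply]
  rw [Finset.sum_comm]
  exact Finset.sum_congr rfl fun i _ => Finset.sum_congr rfl fun j _ => hterm i j

lemma eigenvalues_bounds {M : ℝ} (hM : 0 < M) (hφ : ContDiffOn ℝ 2 φ (cube d))
    (hconv : ∀ x ∈ cube d, ∀ v : E d, (1/M) * ‖v‖^2 ≤ hessW φ x v v)
    {x : E d} (hx : x ∈ cube d) (i : Fin d) :
    hessW φ x ((hess_symm hφ hx).eigenvectorBasis i) ((hess_symm hφ hx).eigenvectorBasis i)
      = (hess_symm hφ hx).eigenvalues i := by
  have hH := hess_symm hφ hx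
  show hessW φ x (hH.eigenvectorBasis i) (hH.eigenvectorBasis i) = hH.eigenvalues i
  have hmv := hH.mulVec_eigenvectorBasis i
  have hmv' : ∀ k, (∑ j, hessMat φ x k j * hH.eigenvectorBasis i j) =
      hH.eigenvalues i * hH.eigenvectorBasis i k := by
    intro k
    have := congrFun hmv k
    simpa [Matrix.mulVec, dotProduct, Pi.smul_apply, smul_eq_mul] using this
  have hnorm : ‖hH.eigenvectorBasis i‖ = 1 := hH.eigenvectorBasis.orthonormal.1 i
  have hsum : ∑ k, hH.eigenvectorBasis i k * hH.eigenvectorBasis i k = 1 := by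
    have h1 : (inner ℝ (hH.eigenvectorBasis i) (hH.eigenvectorBasis i) : ℝ)
        = ∑ k, hH.eigenvectorBasis i k * hH.eigenvectorBasis i k := by
      simp only [PiLp.inner_apply, RCLike.inner_apply, starRingEnd_apply, star_trivial]
    have h2 : (inner ℝ (hH.eigenvectorBasis i) (hH.eigenvectorBasis i) : ℝ)
        = ‖hH.eigenvectorBasis i‖^2 := real_inner_self_eq_norm_sq _
    rw [h1] at h2; rw [h2, hnorm]; norm_num
  rw [hess_qf]
  calc ∑ i', ∑ j, (hH.eigenvectorBasis i i' * hH.eigenvectorBasis i j) * hessMat φ x i' j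
      = ∑ i', hH.eigenvectorBasis i i' * (∑ j, hessMat φ x i' j * hH.eigenvectorBasis i j) := by
        refine Finset.sum_congr rfl fun i' _ => ?_
        rw [Finset.mul_sum]
        exact Finset.sum_congr rfl fun j _ => by ring
    _ = ∑ i', hH.eigenvectorBasis i i' * (hH.eigenvalues i * hH.eigenvectorBasis i i') :=
        Finset.sum_congr rfl fun i' _ => by rw [hmv' i']
    _ = hH.eigenvalues i * ∑ k, hH.eigenvectorBasis i k * hH.eigenvectorBasis i k := by
        rw [Finset.mul_sum]; exact Finset.sum_congr rfl fun k _ => by ring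
    _ = hH.eigenvalues i := by rw [hsum, mul_one]

lemma det_bounds {M : ℝ} (hM : 0 < M) (hφ : ContDiffOn ℝ 2 φ (cube d))
    (hconv : ∀ x ∈ cube d, ∀ v : E d, (1/M) * ‖v‖^2 ≤ hessW φ x v v)
    {x : E d} (hx : x ∈ cube d) :
    (1/M)^d ≤ (hessMat φ x).det ∧
    ((∀ v : E d, hessW φ x v v ≤ M * ‖v‖^2) → (hessMat φ x).det ≤ M^d) := by
  have hH := hess_symm hφ hx
  have hlow : ∀ i, 1/M ≤ (hess_symm hφ hx).eigenvalues i := by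
    intro i
    have h1 := eigenvalues_bounds hM hφ hconv hx i
    have h2 := hconv x hx ((hess_symm hφ hx).eigenvectorBasis i)
    rw [(hess_symm hφ hx).eigenvectorBasis.orthonormal.1 i] at h2
    rw [← h1]
    calc 1/M = (1/M) * (1:ℝ)^2 := by norm_num
      _ ≤ _ := h2
  have hdet : (hessMat φ x).det = ∏ i, (hess_symm hφ hx).eigenvalues i := by
    simpa using (hess_symm hφ hx).det_eq_prod_eigenvalues
  constructor
  · rw [hdet]
    calc (1/M)^d = ∏ _i : Fin d, (1/M) := by
          rw [Finset.prod_const, Finset.card_univ, Fintype.card_fin]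
      _ ≤ ∏ i, (hess_symm hφ hx).eigenvalues i :=
          Finset.prod_le_prod (fun i _ => by positivity) (fun i _ => hlow i)
  · intro hupper
    have hhigh : ∀ i, (hess_symm hφ hx).eigenvalues i ≤ M := by
      intro i
      have h1 := eigenvalues_bounds hM hφ hconv hx i
      have h2 := hupper ((hess_symm hφ hx).eigenvectorBasis i)
      rw [(hess_symm hφ hx).eigenvectorBasis.orthonormal.1 i] at h2
      rw [← h1]
      calc hessW φ x _ _ ≤ M * (1:ℝ)^2 := h2
        _ = M := by norm_num
    rw [hdet]
    calc ∏ i, (hess_symm hφ hx).eigenvalues i ≤ ∏ _i : Fin d, M :=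
          Finset.prod_le_prod (fun i _ => le_trans (by positivity) (hlow i)) (fun i _ => hhigh i)
      _ = M^d := by rw [Finset.prod_const, Finset.card_univ, Fintype.card_fin]

lemma det_pos {M : ℝ} (hM : 0 < M) (hφ : ContDiffOn ℝ 2 φ (cube d))
    (hconv : ∀ x ∈ cube d, ∀ v : E d, (1/M) * ‖v‖^2 ≤ hessW φ x v v)
    {x : E d} (hx : x ∈ cube d) : 0 < (hessMat φ x).det :=
  lt_of_lt_of_le (by positivity) (det_bounds hM hφ hconv hx).1


lemma Amap_det (x : E d) : (Amap φ x).det = (hessMat φ x).det := by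
  set b := (EuclideanSpace.basisFun (Fin d) ℝ).toBasis with hb
  have h1 : (Amap φ x).det = LinearMap.det ((Amap φ x) : E d →ₗ[ℝ] E d) := rfl
  rw [h1, ← LinearMap.det_toMatrix b]
  have h2 : LinearMap.toMatrix b b ((Amap φ x) : E d →ₗ[ℝ] E d) = (hessMat φ x)ᵀ := by
    ext i j
    rw [LinearMap.toMatrix_apply]
    have hbj : b j = EuclideanSpace.single j 1 := by
      rw [hb, OrthonormalBasis.coe_toBasis, EuclideanSpace.basisFun_apply]
    have hrepr : ∀ w : E d, b.repr w i = w i := fun w => by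
      rw [hb, OrthonormalBasis.coe_toBasis_repr_apply, EuclideanSpace.basisFun_repr]
    rw [hrepr, hbj]
    show Smap d (hessW φ x (EuclideanSpace.single j 1)) i = (hessMat φ x)ᵀ i j
    rw [Smap_apply]
    rfl
  rw [h2, Matrix.det_transpose]


lemma cube_isCompact (d : ℕ) : IsCompact (cube d) := by
  apply Metric.isCompact_of_isClosed_isBounded
  · exact cube_isClosed d
  · rw [Metric.isBounded_iff_subset_closedBall 0]
    refine ⟨Real.sqrt d, fun x hx => ?_⟩
    rw [Metric.mem_closedBall, dist_zero_right, EuclideanSpace.norm_eq]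
    apply Real.sqrt_le_sqrt
    calc ∑ i, ‖x i‖^2 ≤ ∑ _i : Fin d, (1:ℝ) := by
          refine Finset.sum_le_sum fun i _ => ?_
          have h := hx i
          rw [Real.norm_eq_abs, abs_of_nonneg h.1]
          nlinarith [h.1, h.2]
      _ = d := by simp

theorem map_eq (hφ : ContDiffOn ℝ 2 φ (cube d)) {M : ℝ} (hM : 0 < M)
    (hconv : ∀ x ∈ cube d, ∀ v : E d, (1/M) * ‖v‖^2 ≤ hessW φ x v v)
    (p : E d → ℝ)
    (hp : ∀ x, p x = if x ∈ gradW φ '' cube d then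
        1 / |(hessMat φ (Function.invFunOn (gradW φ) (cube d) x)).det| else 0) :
    (lam d).map (gradW φ) = volume.withDensity (fun x => ENNReal.ofReal (p x)) := by
  set s := cube d with hs_def
  set f := gradW φ with hf_def
  have hs : MeasurableSet s := cube_measurable d
  have hinj : Set.InjOn f s := grad_injOn hφ hM hconv
  have hf' : ∀ x ∈ s, HasFDerivWithinAt f (Amap φ x) s x := fun x hx => hasFDeriv_grad hφ hx
  have hcont : ContinuousOn f s := fun x hx => (hf' x hx).differentiableWithinAt.continuousWithinAt
  -- measurable modification
  set u := s.piecewise f (fun _ => 0) with hu_def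
  have humeas : Measurable u :=
    ContinuousOn.measurable_piecewise hcont continuous_zero.continuousOn hs
  have huf : Set.EqOn u f s := Set.piecewise_eqOn s f _
  have hu' : ∀ x ∈ s, HasFDerivWithinAt u (Amap φ x) s x :=
    fun x hx => (hf' x hx).congr (fun y hy => huf hy) (huf hx)
  have huinj : Set.InjOn u s := fun a ha b hb h => hinj ha hb (by rwa [huf ha, huf hb] at h)
  have himg : u '' s = f '' s := huf.image_eq
  -- image is measurable
  have hKimg : IsCompact (f '' s) := (cube_isCompact d).image_of_continuousOn hcont
  have himgmeas : MeasurableSet (f '' s) := hKimg.isClosed.measurableSet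
  -- p vanishes outside the image
  have hind : (fun y => ENNReal.ofReal (p y))
      = (f '' s).indicator (fun y => ENNReal.ofReal (p y)) := by
    funext y
    by_cases hy : y ∈ f '' s
    · rw [Set.indicator_of_mem hy]
    · rw [Set.indicator_of_notMem hy, hp y, if_neg hy, ENNReal.ofReal_zero]
  -- the map congruence
  have hmapcongr : (lam d).map f = (lam d).map u := by
    apply Measure.map_congr
    rw [lam]
    exact (ae_restrict_iff' hs).2 (Filter.Eventually.of_forall fun x hx => (huf hx).symm)
  rw [hmapcongr]
  apply Measure.ext
  intro t ht
  rw [Measure.map_apply humeas ht, lam, Measure.restrict_apply (humeas ht)]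
  rw [withDensity_apply _ ht]
  -- RHS reduction to the image
  have hR : ∫⁻ y in t, ENNReal.ofReal (p y) ∂volume
      = ∫⁻ y in (f '' s) ∩ t, ENNReal.ofReal (p y) ∂volume := by
    conv_lhs => rw [hind]
    rw [lintegral_indicator himgmeas, Measure.restrict_restrict himgmeas]
  rw [hR]
  -- change of variables on s' = u⁻¹ t ∩ s
  set s' := u ⁻¹' t ∩ s with hs'_def
  have hs' : MeasurableSet s' := (humeas ht).inter hs
  have hCV := lintegral_image_eq_lintegral_abs_det_fderiv_mul volume hs'
    (fun x hx => (hu' x hx.2).mono Set.inter_subset_right)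
    (huinj.mono Set.inter_subset_right) (fun y => ENNReal.ofReal (p y))
  have himg' : u '' s' = (f '' s) ∩ t := by
    rw [hs'_def, Set.inter_comm, Set.image_inter_preimage, himg]
  rw [himg'] at hCV
  rw [hCV]
  have hone : ∫⁻ x in s', ENNReal.ofReal |(Amap φ x).det| * ENNReal.ofReal (p (u x)) ∂volume
      = ∫⁻ _x in s', (1:ℝ≥0∞) ∂volume := by
    apply setLIntegral_congr_fun hs'
    intro x hx
    show ENNReal.ofReal |(Amap φ x).det| * ENNReal.ofReal (p (u x)) = 1
    have hxs : x ∈ s := hx.2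
    have hdet : (hessMat φ x).det > 0 := det_pos hM hφ hconv hxs
    have hux : u x = f x := huf hxs
    have hpfx : p (u x) = 1 / (hessMat φ x).det := by
      rw [hux, hp]
      rw [if_pos (Set.mem_image_of_mem f hxs)]
      rw [hinj.leftInvOn_invFunOn hxs, abs_of_pos hdet]
    rw [hpfx, Amap_det, abs_of_pos hdet]
    rw [← ENNReal.ofReal_mul (le_of_lt hdet)]
    rw [mul_one_div, div_self (ne_of_gt hdet), ENNReal.ofReal_one]
  rw [hone, setLIntegral_one]


end Aux

/-- a gradient of a `C²` function with Hessian `≥ (1/M)·Id` on the cube is a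
bijection onto its image, the pushforward of Lebesgue measure on the cube has density
`p(x) = 1/|det Hess φ((∇φ)⁻¹(x))|` on the image (and `0` outside), with `p ≤ M^d`;
if additionally `Hess φ ≤ M·Id` then `p ≥ (1/M)^d` on the image. -/
theorem stmt4 {d : ℕ} (M : ℝ) (hM : 0 < M) (φ : E d → ℝ)
    (hφ : ContDiffOn ℝ 2 φ (cube d))
    (hconv : ∀ x ∈ cube d, ∀ v : E d, (1/M) * ‖v‖^2 ≤ hessW φ x v v)
    (p : E d → ℝ)
    (hp : ∀ x, p x = if x ∈ gradW φ '' cube d then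
        1 / |(hessMat φ (Function.invFunOn (gradW φ) (cube d) x)).det| else 0) :
    Set.BijOn (gradW φ) (cube d) (gradW φ '' cube d) ∧
    (lam d).map (gradW φ) = volume.withDensity (fun x => ENNReal.ofReal (p x)) ∧
    (∀ x ∈ gradW φ '' cube d, p x ≤ M ^ d) ∧
    ((∀ x ∈ cube d, ∀ v : E d, hessW φ x v v ≤ M * ‖v‖^2) →
      ∀ x ∈ gradW φ '' cube d, (1/M) ^ d ≤ p x) := by
  refine ⟨(grad_injOn hφ hM hconv).bijOn_image, map_eq hφ hM hconv p hp, ?_, ?_⟩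
  · intro x hx
    rw [hp x, if_pos hx]
    have hy : Function.invFunOn (gradW φ) (cube d) x ∈ cube d :=
      Function.invFunOn_mem ((Set.mem_image _ _ _).1 hx)
    have hd := (det_bounds hM hφ hconv hy).1
    have hpos := det_pos hM hφ hconv hy
    rw [abs_of_pos hpos]
    calc 1 / (hessMat φ (Function.invFunOn (gradW φ) (cube d) x)).det
        ≤ 1 / ((1/M)^d) := one_div_le_one_div_of_le (by positivity) hd
      _ = M^d := by rw [one_div_pow, one_div_one_div]
  · intro hupper x hx
    rw [hp x, if_pos hx]
    have hy : Function.invFunOn (gradW φ) (cube d) x ∈ cube d :=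
      Function.invFunOn_mem ((Set.mem_image _ _ _).1 hx)
    have hd := (det_bounds hM hφ hconv hy).2 (fun v => hupper _ hy v)
    have hpos := det_pos hM hφ hconv hy
    rw [abs_of_pos hpos, one_div_pow]
    exact one_div_le_one_div_of_le hpos hd


end
end
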